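/- Let 𝓕 be a set system and t ≥ 2 an integer. If the graded Radon numbers satisfy rad_𝓕(t) > rad_𝓕(t−1), then t ≤ (2^{rad_𝓕(t−1) − 1} − 1) · h_𝓕(t); equivalently, rad_𝓕(t−1) ≥ 1 + log₂(1 + t / h_𝓕(t)). -/

import Mathlib

/-- The `F`-convex hull of `P`: the intersection of all members of `F` containing `P`
(the whole ground set when no member of `F` contains `P`). -/
def convexHull' {X : Type*} (F : Set (Set X)) (P : Set X) : Set X :=
  ⋂₀ {A | A ∈ F ∧ P ⊆ A}

/-- `P₁, P₂` form a Radon partition (with respect to `F`) of their union. -/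
def IsRadonPartition {X : Type*} (F : Set (Set X)) (P₁ P₂ : Finset X) : Prop :=
  P₁.Nonempty ∧ P₂.Nonempty ∧ Disjoint P₁ P₂ ∧
    (convexHull' F ↑P₁ ∩ convexHull' F ↑P₂).Nonempty

/-- Every `r`-element subset of the ground set admits a Radon partition. -/
def HasRadonAt {X : Type*} (F : Set (Set X)) (r : ℕ) : Prop :=
  ∀ S : Finset X, S.card = r →
    ∃ P₁ P₂ : Finset X, (↑P₁ ∪ ↑P₂ : Set X) = ↑S ∧ IsRadonPartition F P₁ P₂

/-- The Radon number of a set system, `∞` if no `r` works. -/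
noncomputable def radonNumber {X : Type*} (F : Set (Set X)) : ℕ∞ :=
  sInf {r : ℕ∞ | ∃ n : ℕ, r = n ∧ HasRadonAt F n}

/-- The graded Radon number: supremum of Radon numbers of subfamilies of size at most `t`. -/
noncomputable def gradedRadon {X : Type*} (F : Set (Set X)) (t : ℕ) : ℕ∞ :=
  ⨆ G ∈ {G : Finset (Set X) | ↑G ⊆ F ∧ G.card ≤ t}, radonNumber (↑G : Set (Set X))

/-- `F` has the Helly property at `h`: every finite nonempty subfamily of `F` in which
every at most `h` members (nonempty subfamily of size ≤ `h`) have a common point has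
nonempty intersection. -/
def HasHellyAt {X : Type*} (F : Set (Set X)) (h : ℕ) : Prop :=
  ∀ G : Finset (Set X), ↑G ⊆ F → G.Nonempty →
    (∀ G' ⊆ G, G'.Nonempty → G'.card ≤ h → (⋂₀ (↑G' : Set (Set X))).Nonempty) →
    (⋂₀ (↑G : Set (Set X))).Nonempty

/-- The Helly number of a set system, `∞` if no `h` works. -/
noncomputable def hellyNumber {X : Type*} (F : Set (Set X)) : ℕ∞ :=
  sInf {r : ℕ∞ | ∃ n : ℕ, r = n ∧ HasHellyAt F n}

/-- The graded Helly number: supremum of Helly numbers of subfamilies of size at most `t`. -/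
noncomputable def gradedHelly {X : Type*} (F : Set (Set X)) (t : ℕ) : ℕ∞ :=
  ⨆ G ∈ {G : Finset (Set X) | ↑G ⊆ F ∧ G.card ≤ t}, hellyNumber (↑G : Set (Set X))

section Aux
variable {X : Type*}

lemma convexHull'_mono (F : Set (Set X)) {P P' : Set X} (hPP : P ⊆ P') :
    convexHull' F P ⊆ convexHull' F P' :=
  Set.sInter_subset_sInter (fun A hA => ⟨hA.1, hPP.trans hA.2⟩)

lemma convexHull'_subset {F : Set (Set X)} {P A : Set X} (hA : A ∈ F) (hPA : P ⊆ A) :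
    convexHull' F P ⊆ A :=
  Set.sInter_subset_of_mem ⟨hA, hPA⟩

lemma hasRadonAt_mono {F : Set (Set X)} {n m : ℕ} (hn : HasRadonAt F n) (hnm : n ≤ m) :
    HasRadonAt F m := by
  classical
  intro S hS
  obtain ⟨S', hS'sub, hS'card⟩ := Finset.exists_subset_card_eq (s := S) (n := n) (by omega)
  obtain ⟨P₁, P₂, hu, hP₁, hP₂, hdisj, hx⟩ := hn S' hS'card
  have huF : P₁ ∪ P₂ = S' := by
    rw [← Finset.coe_inj, Finset.coe_union]; exact hu
  refine ⟨P₁ ∪ (S \ S'), P₂, ?_, hP₁.mono Finset.subset_union_left, hP₂, ?_, ?_⟩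
  · rw [← Finset.coe_union, Finset.union_right_comm, huF,
      Finset.union_sdiff_of_subset hS'sub]
  · refine Finset.disjoint_union_left.2 ⟨hdisj, ?_⟩
    exact Finset.sdiff_disjoint.mono_right (huF ▸ Finset.subset_union_right : P₂ ⊆ S')
  · exact hx.mono (Set.inter_subset_inter_left _
      (convexHull'_mono _ (by exact_mod_cast Finset.coe_subset.2 Finset.subset_union_left)))

lemma hasRadonAt_of_le {F : Set (Set X)} {r : ℕ} (hle : radonNumber F ≤ (r : ℕ∞)) :
    HasRadonAt F r := by
  have hne : {x : ℕ∞ | ∃ n : ℕ, x = n ∧ HasRadonAt F n}.Nonempty := by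
    by_contra hc
    rw [Set.not_nonempty_iff_eq_empty] at hc
    rw [radonNumber, hc, sInf_empty] at hle
    exact absurd hle (by simp)
  obtain ⟨n, hnval, hnR⟩ := csInf_mem hne
  have : (n : ℕ∞) ≤ (r : ℕ∞) := hnval ▸ hle
  exact hasRadonAt_mono hnR (by exact_mod_cast this)

lemma hasHellyAt_mono {F : Set (Set X)} {n m : ℕ} (hn : HasHellyAt F n) (hnm : n ≤ m) :
    HasHellyAt F m := fun G hGF hGne hyp =>
  hn G hGF hGne fun G' h1 h2 h3 => hyp G' h1 h2 (h3.trans hnm)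

lemma hasHellyAt_of_le {F : Set (Set X)} {h : ℕ} (hle : hellyNumber F ≤ (h : ℕ∞)) :
    HasHellyAt F h := by
  have hne : {x : ℕ∞ | ∃ n : ℕ, x = n ∧ HasHellyAt F n}.Nonempty := by
    by_contra hc
    rw [Set.not_nonempty_iff_eq_empty] at hc
    rw [hellyNumber, hc, sInf_empty] at hle
    exact absurd hle (by simp)
  obtain ⟨n, hnval, hnR⟩ := csInf_mem hne
  have : (n : ℕ∞) ≤ (h : ℕ∞) := hnval ▸ hle
  exact hasHellyAt_mono hnR (by exact_mod_cast this)

lemma not_hasRadonAt_zero (F : Set (Set X)) : ¬ HasRadonAt F 0 := by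
  intro hR
  obtain ⟨P₁, P₂, hu, hP₁, -⟩ := hR ∅ rfl
  obtain ⟨x, hx⟩ := hP₁
  have : (x : X) ∈ (↑P₁ ∪ ↑P₂ : Set X) := Or.inl (by exact_mod_cast hx)
  rw [hu] at this
  simp at this

lemma not_hasRadonAt_one [Nonempty X] (F : Set (Set X)) : ¬ HasRadonAt F 1 := by
  classical
  intro hR
  obtain ⟨x₀⟩ := ‹Nonempty X›
  obtain ⟨P₁, P₂, hu, hP₁, hP₂, hdisj, -⟩ := hR {x₀} (Finset.card_singleton x₀)
  have hsub : P₁ ∪ P₂ = {x₀} := by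
    rw [← Finset.coe_inj, Finset.coe_union]; exact hu
  have h1 : x₀ ∈ P₁ := by
    obtain ⟨y, hy⟩ := hP₁
    have : y ∈ ({x₀} : Finset X) := hsub ▸ Finset.mem_union_left _ hy
    simpa using (Finset.mem_singleton.1 this ▸ hy)
  have h2 : x₀ ∈ P₂ := by
    obtain ⟨y, hy⟩ := hP₂
    have : y ∈ ({x₀} : Finset X) := hsub ▸ Finset.mem_union_right _ hy
    simpa using (Finset.mem_singleton.1 this ▸ hy)
  exact Finset.disjoint_left.1 hdisj h1 h2

lemma one_le_radonNumber (F : Set (Set X)) : 1 ≤ radonNumber F := by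
  refine le_sInf fun b hb => ?_
  obtain ⟨n, rfl, hnR⟩ := hb
  have : n ≠ 0 := fun h => not_hasRadonAt_zero F (h ▸ hnR)
  exact_mod_cast Nat.one_le_iff_ne_zero.2 this

lemma two_le_radonNumber [Nonempty X] (F : Set (Set X)) : 2 ≤ radonNumber F := by
  refine le_sInf fun b hb => ?_
  obtain ⟨n, rfl, hnR⟩ := hb
  have h0 : n ≠ 0 := fun h => not_hasRadonAt_zero F (h ▸ hnR)
  have h1 : n ≠ 1 := fun h => not_hasRadonAt_one F (h ▸ hnR)
  exact_mod_cast (by omega : 2 ≤ n)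

end Aux


section Aux2
variable {X : Type*}

lemma radonNumber_le_gradedRadon {F : Set (Set X)} {G : Finset (Set X)} {t : ℕ}
    (h1 : ↑G ⊆ F) (h2 : G.card ≤ t) : radonNumber (↑G : Set (Set X)) ≤ gradedRadon F t :=
  le_biSup (fun G : Finset (Set X) => radonNumber (↑G : Set (Set X))) ⟨h1, h2⟩

lemma hellyNumber_le_gradedHelly {F : Set (Set X)} {G : Finset (Set X)} {t : ℕ}
    (h1 : ↑G ⊆ F) (h2 : G.card ≤ t) : hellyNumber (↑G : Set (Set X)) ≤ gradedHelly F t :=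
  le_biSup (fun G : Finset (Set X) => hellyNumber (↑G : Set (Set X))) ⟨h1, h2⟩

end Aux2

/-- If the graded Radon number strictly increases at `t` (for `t ≥ 2`), then
`t ≤ (2 ^ (rad_F(t-1) - 1) - 1) * h_F(t)`, equivalently
`rad_F(t-1) ≥ 1 + log₂(1 + t / h_F(t))`. Here `r = rad_F(t-1)` and `h = h_F(t)`
(these graded values are finite). -/
theorem le_of_gradedRadon_lt {X : Type*} (F : Set (Set X)) (t : ℕ) (ht : 2 ≤ t)
    (hlt : gradedRadon F (t - 1) < gradedRadon F t)
    (r h : ℕ) (hr : gradedRadon F (t - 1) = (r : ℕ∞)) (hh : gradedHelly F t = (h : ℕ∞)) :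
    t ≤ (2 ^ (r - 1) - 1) * h := by
  classical
  rcases isEmpty_or_nonempty X with hX | hX
  · exfalso
    have hle1 : gradedRadon F t ≤ 1 := by
      rw [gradedRadon]
      refine iSup₂_le fun G hG => ?_
      refine sInf_le ⟨1, rfl, ?_⟩
      intro S hS
      have hSne : S.Nonempty := Finset.card_pos.1 (by omega)
      exact (hX.false hSne.choose).elim
    have hge1 : 1 ≤ gradedRadon F (t - 1) :=
      le_trans (one_le_radonNumber _)
        (radonNumber_le_gradedRadon (G := (∅ : Finset (Set X))) (by simp) (by simp))
    exact absurd hlt (not_lt.2 (hle1.trans hge1))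
  -- main case : X nonempty
  have hrt : (r : ℕ∞) < gradedRadon F t := hr ▸ hlt
  rw [gradedRadon] at hrt
  simp only [lt_iSup_iff, Set.mem_setOf_eq] at hrt
  obtain ⟨G, ⟨hGF, hGcard⟩, hGrad⟩ := hrt
  have h2r : 2 ≤ r := by
    have h2r' : (2 : ℕ∞) ≤ (r : ℕ∞) := by
      rw [← hr]
      exact le_trans (two_le_radonNumber _)
        (radonNumber_le_gradedRadon (G := (∅ : Finset (Set X))) (by simp) (by simp))
    exact_mod_cast h2r'
  have hGt : G.card = t := by
    by_contra hc
    have hle : radonNumber (↑G : Set (Set X)) ≤ (r : ℕ∞) :=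
      hr ▸ radonNumber_le_gradedRadon hGF (by omega)
    exact absurd hle (not_le.2 hGrad)
  have hnoR : ¬ HasRadonAt (↑G : Set (Set X)) r := by
    intro hR
    have hle2 : radonNumber (↑G : Set (Set X)) ≤ (r : ℕ∞) := by
      rw [radonNumber]; exact sInf_le ⟨r, rfl, hR⟩
    exact absurd hle2 (not_le.2 hGrad)
  rw [HasRadonAt] at hnoR
  push_neg at hnoR
  obtain ⟨S, hScard, hSno⟩ := hnoR
  simp only [IsRadonPartition] at hSno
  have hSne : S.Nonempty := Finset.card_pos.1 (by omega)
  obtain ⟨s₀, hs₀⟩ := hSne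
  set J : Finset (Finset X) := ((S.erase s₀).powerset).erase (S.erase s₀) with hJ
  have hJcard : J.card = 2 ^ (r - 1) - 1 := by
    rw [hJ, Finset.card_erase_of_mem (Finset.mem_powerset_self _), Finset.card_powerset,
      Finset.card_erase_of_mem hs₀, hScard]
  -- for each admissible part, a small witness family with empty intersection
  have hW : ∀ Q' ∈ J, ∃ W : Finset (Set X),
      (∀ B ∈ W, B ∈ G ∧ ((↑(insert s₀ Q') : Set X) ⊆ B ∨ (↑(S \ insert s₀ Q') : Set X) ⊆ B))
      ∧ W.card ≤ h ∧ ⋂₀ (↑W : Set (Set X)) = ∅ := by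
    intro Q' hQ'
    rw [hJ, Finset.mem_erase, Finset.mem_powerset] at hQ'
    obtain ⟨hQne, hQsub⟩ := hQ'
    set P₁ := insert s₀ Q' with hP₁def
    set P₂ := S \ P₁ with hP₂def
    have hP₁S : P₁ ⊆ S := Finset.insert_subset hs₀ (hQsub.trans (Finset.erase_subset _ _))
    have hP₂ne : P₂.Nonempty := by
      obtain ⟨x, hx1, hx2⟩ := Finset.exists_of_ssubset (lt_of_le_of_ne hQsub hQne)
      refine ⟨x, Finset.mem_sdiff.2 ⟨(Finset.erase_subset _ _) hx1, ?_⟩⟩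
      simp only [hP₁def, Finset.mem_insert]
      push_neg
      exact ⟨(Finset.mem_erase.1 hx1).1, hx2⟩
    have hunion : (↑P₁ ∪ ↑P₂ : Set X) = ↑S := by
      rw [← Finset.coe_union, Finset.union_sdiff_of_subset hP₁S]
    have hdisj : Disjoint P₁ P₂ := Finset.disjoint_sdiff
    have hempty : convexHull' (↑G : Set (Set X)) ↑P₁ ∩ convexHull' (↑G : Set (Set X)) ↑P₂ = ∅ := by
      by_contra hc
      exact hSno P₁ P₂ hunion ⟨⟨s₀, Finset.mem_insert_self _ _⟩, hP₂ne, hdisj,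
        Set.nonempty_iff_ne_empty.2 hc⟩
    set Gq : Finset (Set X) := G.filter
      (fun B => (↑P₁ : Set X) ⊆ B ∨ (↑P₂ : Set X) ⊆ B) with hGq
    have hGq_inter : ⋂₀ (↑Gq : Set (Set X)) = ∅ := by
      rw [← hempty]
      ext x
      simp only [convexHull', Set.mem_inter_iff, Set.mem_sInter, Set.mem_setOf_eq,
        hGq, Finset.coe_filter, Finset.mem_coe]
      constructor
      · intro hx
        exact ⟨fun B hB => hx B ⟨hB.1, Or.inl hB.2⟩, fun B hB => hx B ⟨hB.1, Or.inr hB.2⟩⟩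
      · rintro hx B ⟨hBG, hB | hB⟩
        exacts [hx.1 B ⟨hBG, hB⟩, hx.2 B ⟨hBG, hB⟩]
    have hGqne : Gq.Nonempty := by
      by_contra hc
      rw [Finset.not_nonempty_iff_eq_empty] at hc
      rw [hc] at hGq_inter
      simp only [Finset.coe_empty, Set.sInter_empty] at hGq_inter
      exact (Set.univ_nonempty).ne_empty hGq_inter
    have hGqF : (↑Gq : Set (Set X)) ⊆ F := fun B hB =>
      hGF (Finset.mem_coe.2 (Finset.filter_subset _ _ (Finset.mem_coe.1 hB)))
    have hHelly : HasHellyAt (↑Gq : Set (Set X)) h := hasHellyAt_of_le (hh ▸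
      hellyNumber_le_gradedHelly hGqF ((Finset.card_filter_le _ _).trans hGt.le))
    have hnot : ¬ (∀ G' ⊆ Gq, G'.Nonempty → G'.card ≤ h →
        (⋂₀ (↑G' : Set (Set X))).Nonempty) := by
      intro hyp
      have := hHelly Gq (fun _ hB => hB) hGqne hyp
      rw [hGq_inter] at this
      exact Set.not_nonempty_empty this
    push_neg at hnot
    obtain ⟨W, hWsub, hWne, hWcard, hWempty⟩ := hnot
    refine ⟨W, fun B hB => ?_, hWcard, hWempty⟩
    have hBm := hWsub hB
    rw [hGq, Finset.mem_filter] at hBm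
    exact hBm
  choose Wf hWf1 hWf2 hWf3 using hW
  have hcover : G ⊆ J.attach.biUnion (fun q => Wf q.1 q.2) := by
    intro A hA
    by_contra hAnot
    simp only [Finset.mem_biUnion, Finset.mem_attach, true_and, Subtype.exists,
      not_exists] at hAnot
    set G₀ : Finset (Set X) := G.erase A with hG₀
    have hG₀F : (↑G₀ : Set (Set X)) ⊆ F := fun B hB =>
      hGF (Finset.mem_coe.2 ((Finset.erase_subset _ _) (Finset.mem_coe.1 hB)))
    have hG₀card : G₀.card ≤ t - 1 := by
      rw [hG₀, Finset.card_erase_of_mem hA, hGt]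
    have hR : HasRadonAt (↑G₀ : Set (Set X)) r :=
      hasRadonAt_of_le (hr ▸ radonNumber_le_gradedRadon hG₀F hG₀card)
    obtain ⟨P₁, P₂, hu, hP₁ne, hP₂ne, hdisj, x, hx⟩ := hR S hScard
    have huF : P₁ ∪ P₂ = S := by
      rw [← Finset.coe_inj, Finset.coe_union]; exact hu
    have final : ∀ A₁ A₂ : Finset X, A₁ ∪ A₂ = S → Disjoint A₁ A₂ → A₂.Nonempty →
        s₀ ∈ A₁ → x ∈ convexHull' (↑G₀ : Set (Set X)) ↑A₁ →
        x ∈ convexHull' (↑G₀ : Set (Set X)) ↑A₂ → False := by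
      intro A₁ A₂ hu12 hd12 hA₂ne hs₀1 hx1 hx2
      have hA₁S : A₁ ⊆ S := hu12 ▸ Finset.subset_union_left
      set Q' : Finset X := A₁.erase s₀ with hQ'def
      have hinsert : insert s₀ Q' = A₁ := Finset.insert_erase hs₀1
      have hQ'J : Q' ∈ J := by
        rw [hJ, Finset.mem_erase, Finset.mem_powerset]
        constructor
        · intro hEq
          have hA₁eq : A₁ = S := by
            rw [← hinsert, hEq, Finset.insert_erase hs₀]
          obtain ⟨y, hy⟩ := hA₂ne
          have hyS : y ∈ S := hu12 ▸ Finset.mem_union_right _ hy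
          exact Finset.disjoint_left.1 hd12 (hA₁eq ▸ hyS) hy
        · intro z hz
          rw [hQ'def, Finset.mem_erase] at hz
          rw [Finset.mem_erase]
          exact ⟨hz.1, hA₁S hz.2⟩
      have hsdiff : S \ A₁ = A₂ := by
        ext z
        simp only [Finset.mem_sdiff]
        constructor
        · rintro ⟨hzS, hz1⟩
          rw [← hu12] at hzS
          rcases Finset.mem_union.1 hzS with hmem | hmem
          · exact absurd hmem hz1
          · exact hmem
        · intro hz2
          exact ⟨hu12 ▸ Finset.mem_union_right _ hz2,
            fun hz1 => Finset.disjoint_left.1 hd12 hz1 hz2⟩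
      have hxW : x ∈ ⋂₀ (↑(Wf Q' hQ'J) : Set (Set X)) := by
        intro B hB
        obtain ⟨hBG, hBsub⟩ := hWf1 Q' hQ'J B (Finset.mem_coe.1 hB)
        have hBne : B ≠ A := fun hEq => hAnot Q' hQ'J (hEq ▸ (Finset.mem_coe.1 hB))
        have hBG₀ : B ∈ (↑G₀ : Set (Set X)) := by
          rw [hG₀]
          exact Finset.mem_coe.2 (Finset.mem_erase.2 ⟨hBne, hBG⟩)
        rw [hinsert, hsdiff] at hBsub
        rcases hBsub with hs | hs
        · exact convexHull'_subset hBG₀ hs hx1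
        · exact convexHull'_subset hBG₀ hs hx2
      exact Set.notMem_empty x (hWf3 Q' hQ'J ▸ hxW)
    have hs₀u : s₀ ∈ P₁ ∪ P₂ := huF ▸ hs₀
    rcases Finset.mem_union.1 hs₀u with hmem | hmem
    · exact final P₁ P₂ huF hdisj hP₂ne hmem hx.1 hx.2
    · exact final P₂ P₁ (by rw [Finset.union_comm]; exact huF) hdisj.symm hP₁ne hmem hx.2 hx.1
  calc t = G.card := hGt.symm
    _ ≤ (J.attach.biUnion fun q => Wf q.1 q.2).card := Finset.card_le_card hcover
    _ ≤ ∑ q ∈ J.attach, (Wf q.1 q.2).card := Finset.card_biUnion_le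
    _ ≤ ∑ _q ∈ J.attach, h := Finset.sum_le_sum fun q _ => hWf2 q.1 q.2
    _ = J.card * h := by rw [Finset.sum_const, Finset.card_attach, smul_eq_mul]
    _ = (2 ^ (r - 1) - 1) * h := by rw [hJcard]
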